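/- arXiv:1910.08793 — 5 statements merged into one kernel-verified Lean document; each statement's English description precedes it below -/
import Mathlib

section
/- If L is a 2-entangled uncountable linear order, then L has the countable chain condition (there is no uncountable family of pairwise disjoint nonempty open intervals). -/
noncomputable def omega1 : Ordinal.{0} := (Cardinal.aleph 1).ord

/-- A linear order has the countable chain condition if there is no uncountable
family of pairwise disjoint nonempty open intervals. -/
def CCC (L : Type*) [LinearOrder L] : Prop :=
  ¬ ∃ I : Set (L × L), ¬ I.Countable ∧
    (∀ p ∈ I, ∃ c, p.1 < c ∧ c < p.2) ∧
    (∀ p ∈ I, ∀ r ∈ I, p ≠ r →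
      ¬ ∃ c, (p.1 < c ∧ c < p.2) ∧ (r.1 < c ∧ c < r.2))

/-- Separability: a countable set meeting every nonempty open interval. -/
def SeparableOrder (L : Type*) [LinearOrder L] : Prop :=
  ∃ D : Set L, D.Countable ∧ ∀ a b : L, a < b → (∃ c, a < c ∧ c < b) →
    ∃ d ∈ D, a < d ∧ d < b

/-- The first `n` coordinates of `t` form an increasing tuple. -/
def IncreasingTuple {L : Type*} [LinearOrder L] (n : ℕ) (t : ℕ → L) : Prop :=
  ∀ i j : ℕ, i < j → j < n → t i < t j

/-- The `n`-tuples of the sequence `a` (indexed by ordinals `< ω₁`) are pairwise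
disjoint: no coordinate of one tuple equals any coordinate of another. -/
def DisjointSeq {L : Type*} [LinearOrder L] (n : ℕ) (a : Ordinal → ℕ → L) : Prop :=
  ∀ ξ, ξ < omega1 → ∀ δ, δ < omega1 → ξ ≠ δ →
    ∀ i, i < n → ∀ j, j < n → a ξ i ≠ a δ j

/-- The sequence of `n`-tuples `a` realizes the type `g`. -/
def RealizesType {L : Type*} [LinearOrder L] (n : ℕ) (a : Ordinal → ℕ → L)
    (g : ℕ → Bool) : Prop :=
  ∃ ξ, ξ < omega1 ∧ ∃ δ, δ < omega1 ∧ ∀ i, i < n → (a ξ i < a δ i ↔ g i = true)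

/-- `L` is `n`-entangled. -/
def Entangled (L : Type*) [LinearOrder L] (n : ℕ) : Prop :=
  ∀ a : Ordinal → ℕ → L, (∀ ξ, ξ < omega1 → IncreasingTuple n (a ξ)) →
    DisjointSeq n a → ∀ g : ℕ → Bool, RealizesType n a g

/-- The sequence of increasing `n`-tuples is separated: there are
`c 0, …, c (n-2)` with `a ξ i < c i < a ξ (i+1)` for all `ξ < ω₁`. -/
def SeparatedSeq {L : Type*} [LinearOrder L] (n : ℕ) (a : Ordinal → ℕ → L) : Prop :=
  ∃ c : ℕ → L, ∀ ξ, ξ < omega1 → ∀ i, i + 1 < n →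
    a ξ i < c i ∧ c i < a ξ (i + 1)

/-- `L` is weakly `n`-entangled. -/
def WeaklyEntangled (L : Type*) [LinearOrder L] (n : ℕ) : Prop :=
  ∀ a : Ordinal → ℕ → L, (∀ ξ, ξ < omega1 → IncreasingTuple n (a ξ)) →
    DisjointSeq n a → SeparatedSeq n a → ∀ g : ℕ → Bool, RealizesType n a g

universe u
open Cardinal

lemma aux_exists_inj {α : Type u} {S : Set α} (hS : ¬ S.Countable) :
    ∃ f : omega1.ToType → α, Function.Injective f ∧ ∀ x, f x ∈ S := by
  have h1 : Cardinal.aleph 1 ≤ #↥S :=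
    le_of_not_gt fun hlt => hS ((Cardinal.countable_iff_lt_aleph_one S).2 hlt)
  have h2 : Cardinal.lift.{u} #(omega1.ToType) ≤ Cardinal.lift.{0} #↥S := by
    rw [Cardinal.lift_uzero, show omega1 = (Cardinal.aleph 1).ord from rfl,
      Cardinal.mk_ord_toType, Cardinal.lift_aleph, Ordinal.lift_one]
    exact h1
  obtain ⟨e⟩ := Cardinal.lift_mk_le'.mp h2
  exact ⟨fun x => (e x : α), fun a b hab => e.injective (Subtype.ext hab), fun x => (e x).2⟩

/-- a 2-entangled uncountable linear order is c.c.c. -/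
theorem stmt0 (L : Type*) [LinearOrder L] [Uncountable L]
    (h : Entangled L 2) : CCC L := by
  rintro ⟨I, hIc, hint, hdisj⟩
  -- left endpoints are injective on I
  have hfst : ∀ p ∈ I, ∀ r ∈ I, p.1 = r.1 → p = r := by
    intro p hp r hr hh
    by_contra hne
    rcases le_total p.2 r.2 with h2 | h2
    · obtain ⟨c, hc1, hc2⟩ := hint p hp
      exact hdisj p hp r hr hne ⟨c, ⟨hc1, hc2⟩, ⟨hh ▸ hc1, lt_of_lt_of_le hc2 h2⟩⟩
    · obtain ⟨c, hc1, hc2⟩ := hint r hr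
      exact hdisj p hp r hr hne ⟨c, ⟨hh ▸ hc1, lt_of_lt_of_le hc2 h2⟩, ⟨hc1, hc2⟩⟩
  have hsnd : ∀ p ∈ I, ∀ r ∈ I, p.2 = r.2 → p = r := by
    intro p hp r hr hh
    by_contra hne
    rcases le_total p.1 r.1 with h1 | h1
    · obtain ⟨c, hc1, hc2⟩ := hint r hr
      exact hdisj p hp r hr hne ⟨c, ⟨lt_of_le_of_lt h1 hc1, hh ▸ hc2⟩, ⟨hc1, hc2⟩⟩
    · obtain ⟨c, hc1, hc2⟩ := hint p hp
      exact hdisj p hp r hr hne ⟨c, ⟨hc1, hc2⟩, ⟨lt_of_le_of_lt h1 hc1, hh ▸ hc2⟩⟩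
  -- Zorn: maximal subfamily with fully disjoint coordinates
  set 𝒮 : Set (Set (L × L)) :=
    {S | S ⊆ I ∧ ∀ p ∈ S, ∀ r ∈ S, p ≠ r → p.1 ≠ r.2} with h𝒮
  obtain ⟨S, hSmax⟩ := zorn_subset 𝒮 (by
    intro c hc hchain
    refine ⟨⋃₀ c, ⟨Set.sUnion_subset fun s hs => (hc hs).1, ?_⟩, fun s hs => Set.subset_sUnion_of_mem hs⟩
    rintro p ⟨A, hA, hpA⟩ r ⟨B, hB, hrB⟩ hpr
    rcases eq_or_ne A B with rfl | hAB
    · exact (hc hA).2 p hpA r hrB hpr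
    · rcases hchain hA hB hAB with hsub | hsub
      · exact (hc hB).2 p (hsub hpA) r hrB hpr
      · exact (hc hA).2 p hpA r (hsub hrB) hpr)
  have hSI : S ⊆ I := hSmax.1.1
  have hSgood : ∀ p ∈ S, ∀ r ∈ S, p ≠ r → p.1 ≠ r.2 := hSmax.1.2
  -- S is uncountable
  have hSc : ¬ S.Countable := by
    intro hc
    apply hIc
    have hsub : I ⊆ S ∪ ⋃ s ∈ S, ({i | i ∈ I ∧ i.1 = s.2} ∪ {i | i ∈ I ∧ i.2 = s.1}) := by
      intro i hi
      by_cases hiS : i ∈ S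
      · exact Or.inl hiS
      have hnot : insert i S ∉ 𝒮 := by
        intro hmem
        exact hiS (hSmax.2 hmem (Set.subset_insert i S) (Set.mem_insert i S))
      rw [h𝒮] at hnot
      simp only [Set.mem_setOf_eq, not_and] at hnot
      have hsubI : insert i S ⊆ I := Set.insert_subset hi hSI
      push_neg at hnot
      obtain ⟨p, hp, r, hr, hpr, heq⟩ := hnot hsubI
      rcases Set.mem_insert_iff.1 hp with rfl | hpS
      · rcases Set.mem_insert_iff.1 hr with rfl | hrS
        · exact absurd rfl hpr
        · refine Or.inr (Set.mem_biUnion hrS (Or.inl ⟨hi, heq⟩))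
      · rcases Set.mem_insert_iff.1 hr with rfl | hrS
        · exact Or.inr (Set.mem_biUnion hpS (Or.inr ⟨hi, heq.symm⟩))
        · exact absurd heq (hSgood p hpS r hrS hpr)
    refine Set.Countable.mono hsub (hc.union (Set.Countable.biUnion hc fun s hs => ?_))
    refine Set.Countable.union ?_ ?_
    · refine Set.Subsingleton.countable ?_
      intro x ⟨hx, hx2⟩ y ⟨hy, hy2⟩
      exact hfst x hx y hy (hx2.trans hy2.symm)
    · refine Set.Subsingleton.countable ?_
      intro x ⟨hx, hx2⟩ y ⟨hy, hy2⟩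
      exact hsnd x hx y hy (hx2.trans hy2.symm)
  -- extract an ω₁-sequence
  obtain ⟨f, hfinj, hfS⟩ := aux_exists_inj hSc
  have hLne : Nonempty (L × L) := inferInstance
  set φ : Ordinal → L × L := fun ξ =>
    if hξ : ξ < omega1 then f (Ordinal.ToType.mk (o := omega1) ⟨ξ, hξ⟩)
    else Classical.arbitrary _ with hφ
  have hφS : ∀ ξ, ξ < omega1 → φ ξ ∈ S := by
    intro ξ hξ; rw [hφ]; simp only [dif_pos hξ]; exact hfS _
  have hφinj : ∀ ξ, ξ < omega1 → ∀ δ, δ < omega1 → ξ ≠ δ → φ ξ ≠ φ δ := by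
    intro ξ hξ δ hδ hne heq
    rw [hφ] at heq
    simp only [dif_pos hξ, dif_pos hδ] at heq
    exact hne (Subtype.mk_eq_mk.1 ((Ordinal.ToType.mk (o := omega1)).injective (hfinj heq)))
  have hφlt : ∀ ξ, ξ < omega1 → (φ ξ).1 < (φ ξ).2 := by
    intro ξ hξ
    obtain ⟨c, hc1, hc2⟩ := hint (φ ξ) (hSI (hφS ξ hξ))
    exact hc1.trans hc2
  set a : Ordinal → ℕ → L := fun ξ n => if n = 0 then (φ ξ).1 else (φ ξ).2 with ha
  have hainc : ∀ ξ, ξ < omega1 → IncreasingTuple 2 (a ξ) := by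
    intro ξ hξ i j hij hj2
    have hi : i = 0 := by omega
    have hjj : j = 1 := by omega
    subst hi; subst hjj
    simpa [ha] using hφlt ξ hξ
  have hadis : DisjointSeq 2 a := by
    intro ξ hξ δ hδ hne i hi j hj
    have hpq := hφinj ξ hξ δ hδ hne
    have hξS := hφS ξ hξ
    have hδS := hφS δ hδ
    interval_cases i <;> interval_cases j <;> simp only [ha] <;> norm_num
    · exact fun e => hpq (hfst _ (hSI hξS) _ (hSI hδS) e)
    · exact hSgood _ hξS _ hδS hpq
    · exact fun e => (hSgood _ hδS _ hξS hpq.symm) e.symm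
    · exact fun e => hpq (hsnd _ (hSI hξS) _ (hSI hδS) e)
  obtain ⟨ξ, hξ, δ, hδ, hg⟩ := h a hainc hadis (fun n => decide (n = 0))
  have h0 : (φ ξ).1 < (φ δ).1 := by simpa [ha] using (hg 0 (by norm_num)).2 (by norm_num)
  have h1 : (φ δ).2 ≤ (φ ξ).2 := by
    have := hg 1 (by norm_num)
    simp [ha] at this
    exact this
  have hneq : φ ξ ≠ φ δ := fun e => absurd (congrArg Prod.fst e) (ne_of_lt h0)
  obtain ⟨c, hc1, hc2⟩ := hint (φ δ) (hSI (hφS δ hδ))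
  exact hdisj (φ ξ) (hSI (hφS ξ hξ)) (φ δ) (hSI (hφS δ hδ)) hneq
    ⟨c, ⟨h0.trans hc1, lt_of_lt_of_le hc2 h1⟩, hc1, hc2⟩
end

section
/- If L is a 3-entangled uncountable linear order, then L is separable: there is a countable set D ⊆ L such that whenever a <_L b and some element lies strictly between a and b, some element of D lies strictly between a and b. -/
section Aux
variable {L : Type*} [LinearOrder L]

def GoodTriple (D : Set L) (t : ℕ → L) : Prop :=
  t 0 < t 1 ∧ t 1 < t 2 ∧ (∀ i, i < 3 → t i ∉ D) ∧ ∀ d ∈ D, ¬(t 0 < d ∧ d < t 2)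

lemma succset_subsingleton (d : L) :
    ({x | d < x ∧ ∀ z, ¬(d < z ∧ z < x)} : Set L).Subsingleton := by
  intro x hx y hy
  by_contra hne
  rcases lt_or_gt_of_ne hne with hlt | hlt
  · exact hy.2 x ⟨hx.1, hlt⟩
  · exact hx.2 y ⟨hy.1, hlt⟩

lemma predset_subsingleton (d : L) :
    ({x | x < d ∧ ∀ z, ¬(x < z ∧ z < d)} : Set L).Subsingleton := by
  intro x hx y hy
  by_contra hne
  rcases lt_or_gt_of_ne hne with hlt | hlt
  · exact hx.2 y ⟨hlt, hy.1⟩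
  · exact hy.2 x ⟨hlt, hx.1⟩

lemma key_interval (hns : ¬ SeparableOrder L) (E : Set L) (hE : E.Countable) :
    ∃ a b : L, a < b ∧ (∃ c, a < c ∧ c < b) ∧ ∀ d ∈ E, ¬(a < d ∧ d < b) := by
  by_contra hcon
  push_neg at hcon
  apply hns
  refine ⟨E, hE, ?_⟩
  intro a b hab hc
  by_contra hplug
  push_neg at hplug
  obtain ⟨d, hd, hd2⟩ := hcon a b hab hc
  exact absurd (hplug d hd hd2.1) (not_le.2 hd2.2)

lemma stage (hns : ¬ SeparableOrder L) (D : Set L) (hD : D.Countable) :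
    ∃ t : ℕ → L, GoodTriple D t := by
  set D₂ : Set L := D ∪ (⋃ d ∈ D, ({x | d < x ∧ ∀ z, ¬(d < z ∧ z < x)}
      ∪ {x | x < d ∧ ∀ z, ¬(x < z ∧ z < d)})) with hD₂def
  have hD₂ : D₂.Countable := hD.union (hD.biUnion fun d _ =>
    ((succset_subsingleton d).countable).union ((predset_subsingleton d).countable))
  obtain ⟨a0, b0, hab, ⟨c, hc1, hc2⟩, hno⟩ := key_interval hns D₂ hD₂
  have hint : ∀ x, a0 < x → x < b0 → x ∉ D₂ := fun x h1 h2 hx => hno x hx ⟨h1, h2⟩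
  have hcD : c ∉ D₂ := hint c hc1 hc2
  have hleft : ∃ a, a ∉ D ∧ a0 ≤ a ∧ a < c := by
    by_cases ha : a0 ∈ D
    · by_cases hgap : ∃ x, a0 < x ∧ x < c
      · obtain ⟨x, hx1, hx2⟩ := hgap
        exact ⟨x, fun hxD => hint x hx1 (hx2.trans hc2) (Or.inl hxD), le_of_lt hx1, hx2⟩
      · exfalso
        apply hcD
        exact Or.inr (Set.mem_biUnion ha (Or.inl ⟨hc1, fun z hz => hgap ⟨z, hz⟩⟩))
    · exact ⟨a0, ha, le_refl _, hc1⟩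
  have hright : ∃ b, b ∉ D ∧ b ≤ b0 ∧ c < b := by
    by_cases hb : b0 ∈ D
    · by_cases hgap : ∃ x, c < x ∧ x < b0
      · obtain ⟨x, hx1, hx2⟩ := hgap
        exact ⟨x, fun hxD => hint x (hc1.trans hx1) hx2 (Or.inl hxD), le_of_lt hx2, hx1⟩
      · exfalso
        apply hcD
        exact Or.inr (Set.mem_biUnion hb (Or.inr ⟨hc2, fun z hz => hgap ⟨z, hz⟩⟩))
    · exact ⟨b0, hb, le_refl _, hc2⟩
  obtain ⟨a, haD, ha0, hac⟩ := hleft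
  obtain ⟨b, hbD, hb0, hcb⟩ := hright
  refine ⟨fun i => if i = 0 then a else if i = 1 then c else b, hac, hcb, ?_, ?_⟩
  · intro i hi
    interval_cases i
    · simpa using haD
    · simpa using fun hc => hcD (Or.inl hc)
    · simpa using hbD
  · intro d hd hcon
    simp only [if_pos, if_neg] at hcon
    norm_num at hcon
    exact hno d (Or.inl hd) ⟨lt_of_le_of_lt ha0 hcon.1, lt_of_lt_of_le hcon.2 hb0⟩

open Classical in
noncomputable def pickT [Nonempty L] (D : Set L) : ℕ → L :=
  if h : ∃ t : ℕ → L, GoodTriple D t then h.choose else fun _ => Classical.arbitrary L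

lemma pickT_good [Nonempty L] (hns : ¬ SeparableOrder L) (D : Set L) (hD : D.Countable) :
    GoodTriple D (pickT D) := by
  have h := stage hns D hD
  rw [pickT, dif_pos h]
  exact h.choose_spec

set_option linter.unusedSectionVars false in
lemma Dset_countable (F : Ordinal → ℕ → L) {β : Ordinal} (hβ : β < omega1) :
    ({x | ∃ α, α < β ∧ ∃ i, i < 3 ∧ F α i = x} : Set L).Countable := by
  have h1 : (Set.Iio β).Countable := by
    rw [Cardinal.countable_iff_lt_aleph_one, Ordinal.mk_Iio_ordinal, Cardinal.lift_lt_aleph_one]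
    rw [omega1] at hβ
    exact Cardinal.lt_ord.1 hβ
  have hsub : ({x | ∃ α, α < β ∧ ∃ i, i < 3 ∧ F α i = x} : Set L)
      ⊆ ⋃ α ∈ Set.Iio β, ⋃ i ∈ (Set.univ : Set ℕ), {F α i} := by
    rintro x ⟨α, hα, i, _, rfl⟩
    exact Set.mem_biUnion hα (Set.mem_biUnion (Set.mem_univ i) rfl)
  exact Set.Countable.mono hsub (h1.biUnion fun α _ =>
    (Set.to_countable _).biUnion fun i _ => Set.countable_singleton _)

lemma exists_seq [Nonempty L] (hns : ¬ SeparableOrder L) :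
    ∃ F : Ordinal → ℕ → L, ∀ β, β < omega1 →
      (F β 0 < F β 1 ∧ F β 1 < F β 2) ∧
      (∀ α, α < β → ∀ i, i < 3 → ∀ j, j < 3 → F α i ≠ F β j) ∧
      (∀ α, α < β → ∀ i, i < 3 → ¬(F β 0 < F α i ∧ F α i < F β 2)) := by
  let body : ∀ β : Ordinal, (∀ α, α < β → ℕ → L) → ℕ → L :=
    fun β rec => pickT {x | ∃ α, ∃ h : α < β, ∃ i, i < 3 ∧ rec α h i = x}
  refine ⟨Ordinal.lt_wf.fix body, ?_⟩
  set F := Ordinal.lt_wf.fix body with hFdef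
  intro β hβ
  have hsets : {x | ∃ α, ∃ _ : α < β, ∃ i, i < 3 ∧ F α i = x}
      = {x | ∃ α, α < β ∧ ∃ i, i < 3 ∧ F α i = x} := by
    ext x
    simp only [Set.mem_setOf_eq, exists_prop]
  have hFβ : F β = pickT {x | ∃ α, α < β ∧ ∃ i, i < 3 ∧ F α i = x} := by
    conv_lhs => rw [hFdef, WellFounded.fix_eq]
    show pickT {x | ∃ α, ∃ _ : α < β, ∃ i, i < 3 ∧ F α i = x} = _
    rw [hsets]
  have hgood : GoodTriple {x | ∃ α, α < β ∧ ∃ i, i < 3 ∧ F α i = x} (F β) := by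
    rw [hFβ]
    exact pickT_good hns _ (Dset_countable F hβ)
  obtain ⟨h01, h12, hnotin, hnoin⟩ := hgood
  refine ⟨⟨h01, h12⟩, ?_, ?_⟩
  · intro α hα i hi j hj heq
    exact hnotin j hj ⟨α, hα, i, hi, heq⟩
  · intro α hα i hi hcon
    exact hnoin (F α i) ⟨α, hα, i, hi, rfl⟩ hcon

end Aux

/-- a 3-entangled uncountable linear order is separable. -/
theorem stmt1 (L : Type*) [LinearOrder L] [Uncountable L]
    (h : Entangled L 3) : SeparableOrder L := by
  by_contra hns
  have hne : Nonempty L := inferInstance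
  obtain ⟨F, hF⟩ := exists_seq hns
  have hinc : ∀ ξ, ξ < omega1 → IncreasingTuple 3 (F ξ) := by
    intro ξ hξ i j hij hj3
    obtain ⟨⟨h01, h12⟩, -, -⟩ := hF ξ hξ
    interval_cases j
    · omega
    · have : i = 0 := by omega
      rw [this]; exact h01
    · rcases (show i = 0 ∨ i = 1 by omega) with rfl | rfl
      · exact h01.trans h12
      · exact h12
  have hdisj : DisjointSeq 3 F := by
    intro ξ hξ δ hδ hnee i hi j hj
    rcases lt_or_gt_of_ne hnee with hlt | hlt
    · exact (hF δ hδ).2.1 ξ hlt i hi j hj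
    · intro heq
      exact (hF ξ hξ).2.1 δ hlt j hj i hi heq.symm
  obtain ⟨ξ, hξ, δ, hδ, hreal⟩ := h F hinc hdisj (fun i => decide (i = 1))
  have e0 := hreal 0 (by norm_num)
  have e1 := hreal 1 (by norm_num)
  have e2 := hreal 2 (by norm_num)
  simp only [decide_eq_true_eq] at e0 e1 e2
  have he0 : ¬ F ξ 0 < F δ 0 := fun hc => Nat.zero_ne_one (e0.1 hc)
  have he2 : ¬ F ξ 2 < F δ 2 := fun hc => (by norm_num : (2:ℕ) ≠ 1) (e2.1 hc)
  have he1 : F ξ 1 < F δ 1 := e1.2 trivial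
  have hned : ξ ≠ δ := by
    rintro rfl
    exact lt_irrefl _ he1
  have h00 : F δ 0 < F ξ 0 :=
    lt_of_le_of_ne (not_lt.1 he0) (hdisj δ hδ ξ hξ hned.symm 0 (by norm_num) 0 (by norm_num))
  have h22 : F δ 2 < F ξ 2 :=
    lt_of_le_of_ne (not_lt.1 he2) (hdisj δ hδ ξ hξ hned.symm 2 (by norm_num) 2 (by norm_num))
  rcases lt_or_gt_of_ne hned with hlt | hlt
  · exact (hF δ hδ).2.2 ξ hlt 1 (by norm_num)
      ⟨h00.trans (hF ξ hξ).1.1, he1.trans (hF δ hδ).1.2⟩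
  · exact (hF ξ hξ).2.2 δ hlt 1 (by norm_num)
      ⟨(hF ξ hξ).1.1.trans he1, (hF δ hδ).1.2.trans h22⟩
end

section
/- No Suslin line is 3-entangled. -/
set_option linter.unusedSectionVars false

namespace Stmt2Aux
open Set Cardinal
open scoped Classical

variable {L : Type*} [LinearOrder L]

def coords4 (t : L × L × L × L) : Set L := {t.1, t.2.1, t.2.2.1, t.2.2.2}

def prevSet (D0 : Set L) (f : Ordinal → L × L × L × L) (ξ : Ordinal) : Set L :=
  D0 ∪ ⋃ η, ⋃ (_ : η < ξ), coords4 (f η)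

noncomputable def recPts (D0 : Set L) (F : ∀ D : Set L, D.Countable → L × L × L × L)
    (d : L × L × L × L) : Ordinal → L × L × L × L :=
  Ordinal.lt_wf.fix fun ξ ih =>
    if h : (D0 ∪ ⋃ η, ⋃ (hη : η < ξ), coords4 (ih η hη)).Countable then F _ h else d

theorem recPts_eq (D0 : Set L) (F : ∀ D : Set L, D.Countable → L × L × L × L)
    (d : L × L × L × L) (ξ : Ordinal) :
    recPts D0 F d ξ =
      if h : (prevSet D0 (recPts D0 F d) ξ).Countable then F _ h else d := by
  unfold recPts
  rw [WellFounded.fix_eq]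
  rfl

theorem countable_Iio {ξ : Ordinal} (hξ : ξ < omega1) : (Set.Iio ξ).Countable := by
  rw [Cardinal.countable_iff_lt_aleph_one, Ordinal.mk_Iio_ordinal, Cardinal.lift_lt_aleph_one]
  exact Cardinal.lt_ord.mp hξ

theorem not_countable_Iio : ¬ (Set.Iio omega1).Countable := by
  rw [Cardinal.countable_iff_lt_aleph_one, Ordinal.mk_Iio_ordinal, Cardinal.lift_lt_aleph_one]
  simp [omega1, Cardinal.card_ord]

theorem prevSet_countable {D0 : Set L} (hD0 : D0.Countable)
    (f : Ordinal → L × L × L × L) {ξ : Ordinal} (hξ : ξ < omega1) :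
    (prevSet D0 f ξ).Countable := by
  refine hD0.union ?_
  have : (⋃ η ∈ Set.Iio ξ, coords4 (f η)).Countable := by
    refine (countable_Iio hξ).biUnion fun η _ => ?_
    exact (((Set.countable_singleton _).insert _).insert _).insert _
  exact this

theorem mem_prevSet {D0 : Set L} {f : Ordinal → L × L × L × L} {η ξ : Ordinal}
    (h : η < ξ) {v : L} (hv : v ∈ coords4 (f η)) : v ∈ prevSet D0 f ξ :=
  Or.inr (Set.mem_iUnion.2 ⟨η, Set.mem_iUnion.2 ⟨h, hv⟩⟩)

theorem chain3 {p q r : L} (hpq : p ≠ q) (hpr : p ≠ r) (hqr : q ≠ r) :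
    ∃ x y z, x < y ∧ y < z ∧ x ∈ ({p, q, r} : Set L) ∧ y ∈ ({p, q, r} : Set L) ∧
      z ∈ ({p, q, r} : Set L) := by
  rcases hpq.lt_or_gt with h1 | h1 <;> rcases hpr.lt_or_gt with h2 | h2 <;>
    rcases hqr.lt_or_gt with h3 | h3
  · exact ⟨p, q, r, h1, h3, by simp, by simp, by simp⟩
  · exact ⟨p, r, q, h2, h3, by simp, by simp, by simp⟩
  · exact absurd (h3.trans (h2.trans h1)) (lt_irrefl q)
  · exact ⟨r, p, q, h2, h1, by simp, by simp, by simp⟩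
  · exact ⟨q, p, r, h1, h2, by simp, by simp, by simp⟩
  · exact absurd (h2.trans (h3.trans h1)) (lt_irrefl p)
  · exact ⟨q, r, p, h3, h2, by simp, by simp, by simp⟩
  · exact ⟨r, q, p, h3, h1, by simp, by simp, by simp⟩

end Stmt2Aux

/-- no Suslin line (c.c.c. non-separable linear order) is 3-entangled. -/
theorem stmt2 (L : Type*) [LinearOrder L]
    (hccc : CCC L) (hsep : ¬ SeparableOrder L) : ¬ Entangled L 3 := by
  classical
  intro hent
  unfold SeparableOrder at hsep
  push_neg at hsep
  by_cases hgood : ∀ D : Set L, D.Countable → ∃ x y z : L, x < y ∧ y < z ∧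
      x ∉ D ∧ y ∉ D ∧ z ∉ D ∧ ∀ d ∈ D, ¬ (x < d ∧ d < z)
  · -- GOOD CASE: build the triples and refute type (1,0,1)
    choose X Y Z hXY hYZ hXD hYD hZD havoid using hgood
    set F : ∀ D : Set L, D.Countable → L × L × L × L :=
      fun D hD => (X D hD, Y D hD, Z D hD, Z D hD) with hFdef
    set f : Ordinal → L × L × L × L :=
      Stmt2Aux.recPts ∅ F (F ∅ Set.countable_empty) with hfdef
    have hkey : ∀ ξ : Ordinal, ξ < omega1 →
        (f ξ).1 < (f ξ).2.1 ∧ (f ξ).2.1 < (f ξ).2.2.1 ∧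
        (f ξ).1 ∉ Stmt2Aux.prevSet ∅ f ξ ∧ (f ξ).2.1 ∉ Stmt2Aux.prevSet ∅ f ξ ∧
        (f ξ).2.2.1 ∉ Stmt2Aux.prevSet ∅ f ξ ∧
        ∀ d ∈ Stmt2Aux.prevSet ∅ f ξ, ¬ ((f ξ).1 < d ∧ d < (f ξ).2.2.1) := by
      intro ξ hξ
      have hc : (Stmt2Aux.prevSet ∅ f ξ).Countable :=
        Stmt2Aux.prevSet_countable Set.countable_empty f hξ
      have he : f ξ = F (Stmt2Aux.prevSet ∅ f ξ) hc := by
        have h2 := Stmt2Aux.recPts_eq ∅ F (F ∅ Set.countable_empty) ξ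
        rw [← hfdef] at h2
        rw [h2]
        exact dif_pos hc
      rw [he]
      exact ⟨hXY _ hc, hYZ _ hc, hXD _ hc, hYD _ hc, hZD _ hc, havoid _ hc⟩
    set a : Ordinal → ℕ → L := fun ξ i =>
      match i with
      | 0 => (f ξ).1
      | 1 => (f ξ).2.1
      | _ => (f ξ).2.2.1 with hadef
    have hmem : ∀ η ξ : Ordinal, η < ξ → ∀ i, i < 3 → a η i ∈ Stmt2Aux.prevSet ∅ f ξ := by
      intro η ξ h i hi
      refine Stmt2Aux.mem_prevSet h ?_
      interval_cases i <;> simp [hadef, Stmt2Aux.coords4]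
    have hnotmem : ∀ ξ, ξ < omega1 → ∀ i, i < 3 → a ξ i ∉ Stmt2Aux.prevSet ∅ f ξ := by
      intro ξ hξ i hi
      obtain ⟨-, -, h1, h2, h3, -⟩ := hkey ξ hξ
      interval_cases i
      · exact h1
      · exact h2
      · exact h3
    have hinc : ∀ ξ, ξ < omega1 → IncreasingTuple 3 (a ξ) := by
      intro ξ hξ i j hij hj
      obtain ⟨k1, k2, -⟩ := hkey ξ hξ
      have hj' : j = 1 ∧ i = 0 ∨ j = 2 ∧ i = 0 ∨ j = 2 ∧ i = 1 := by omega
      rcases hj' with ⟨rfl, rfl⟩ | ⟨rfl, rfl⟩ | ⟨rfl, rfl⟩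
      · exact k1
      · exact k1.trans k2
      · exact k2
    have hdisj : DisjointSeq 3 a := by
      intro ξ hξ δ hδ hne i hi j hj
      rcases hne.lt_or_gt with h | h
      · exact fun he => hnotmem δ hδ j hj (he ▸ hmem ξ δ h i hi)
      · exact fun he => hnotmem ξ hξ i hi (he.symm ▸ hmem δ ξ h j hj)
    obtain ⟨ξ, hξ, δ, hδ, hrel⟩ := hent a hinc hdisj (fun i => if i = 1 then false else true)
    have h0 : a ξ 0 < a δ 0 := (hrel 0 (by norm_num)).2 (by norm_num)
    have h1 : ¬ (a ξ 1 < a δ 1) := fun h => by simpa using (hrel 1 (by norm_num)).1 h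
    have h2 : a ξ 2 < a δ 2 := (hrel 2 (by norm_num)).2 (by norm_num)
    have hne : ξ ≠ δ := by rintro rfl; exact lt_irrefl _ h0
    have hy : a δ 1 < a ξ 1 :=
      lt_of_le_of_ne (not_lt.1 h1) (hdisj δ hδ ξ hξ hne.symm 1 (by norm_num) 1 (by norm_num))
    have hzx : a ξ 2 ≤ a δ 0 := by
      rcases hne.lt_or_gt with h | h
      · have hv := (hkey δ hδ).2.2.2.2.2 (a ξ 2) (hmem ξ δ h 2 (by norm_num))
        by_contra hcon
        push_neg at hcon
        exact hv ⟨hcon, h2⟩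
      · have hv := (hkey ξ hξ).2.2.2.2.2 (a δ 0) (hmem δ ξ h 0 (by norm_num))
        by_contra hcon
        push_neg at hcon
        exact hv ⟨h0, hcon⟩
    have hc1 : a ξ 1 < a ξ 2 := hinc ξ hξ 1 2 (by norm_num) (by norm_num)
    have hc2 : a δ 0 < a δ 1 := hinc δ hδ 0 1 (by norm_num) (by norm_num)
    exact absurd hy (not_lt.2 ((hc1.trans_le hzx).trans hc2).le)
  · -- BAD CASE: contradict CCC
    push_neg at hgood
    obtain ⟨Dstar, hDstar, hbad⟩ := hgood
    have H2 : ∀ D : Set L, D.Countable → ∃ t : L × L × L × L,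
        (t.1 < t.2.2.1 ∧ t.2.2.1 < t.2.1) ∧
        (∀ d ∈ D, ¬ (t.1 < d ∧ d < t.2.1)) ∧
        (∀ p, t.1 < p → p < t.2.1 → p = t.2.2.1 ∨ p = t.2.2.2) := by
      intro D hD
      obtain ⟨u, v, huv, ⟨w, hw1, hw2⟩, havoid⟩ := hsep (Dstar ∪ D) (hDstar.union hD)
      have hIooD : ∀ q, u < q → q < v → q ∉ Dstar := fun q hq1 hq2 hq =>
        (havoid q (Or.inl hq) hq1).not_gt hq2
      by_cases hex : ∃ p, (u < p ∧ p < v) ∧ p ≠ w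
      · obtain ⟨e, ⟨he1, he2⟩, hnew⟩ := hex
        refine ⟨(u, v, w, e), ⟨hw1, hw2⟩, fun d hd hdd => (havoid d (Or.inr hd) hdd.1).not_gt hdd.2, ?_⟩
        intro p hp1 hp2
        by_contra hcon
        push_neg at hcon
        obtain ⟨hpw, hpe⟩ := hcon
        obtain ⟨x, y, z, hxy, hyz, hx, hy, hz⟩ := Stmt2Aux.chain3 hpw hpe (Ne.symm hnew)
        have hmemIoo : ∀ q ∈ ({p, w, e} : Set L), u < q ∧ q < v := by
          intro q hq
          simp only [Set.mem_insert_iff, Set.mem_singleton_iff] at hq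
          rcases hq with rfl | rfl | rfl
          · exact ⟨hp1, hp2⟩
          · exact ⟨hw1, hw2⟩
          · exact ⟨he1, he2⟩
        obtain ⟨d, hdD, hd1, hd2⟩ := hbad x y z hxy hyz
          (hIooD x (hmemIoo x hx).1 (hmemIoo x hx).2)
          (hIooD y (hmemIoo y hy).1 (hmemIoo y hy).2)
          (hIooD z (hmemIoo z hz).1 (hmemIoo z hz).2)
        exact (havoid d (Or.inl hdD) ((hmemIoo x hx).1.trans hd1)).not_gt (hd2.trans (hmemIoo z hz).2)
      · push_neg at hex
        exact ⟨(u, v, w, w), ⟨hw1, hw2⟩, fun d hd hdd => (havoid d (Or.inr hd) hdd.1).not_gt hdd.2,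
          fun p hp1 hp2 => Or.inl (hex p ⟨hp1, hp2⟩)⟩
    choose F2 hQ1 hQ2 hQ3 using H2
    set f := Stmt2Aux.recPts Dstar F2 (F2 ∅ Set.countable_empty) with hfdef
    have hkey : ∀ ξ : Ordinal, ξ < omega1 →
        ((f ξ).1 < (f ξ).2.2.1 ∧ (f ξ).2.2.1 < (f ξ).2.1) ∧
        (∀ d ∈ Stmt2Aux.prevSet Dstar f ξ, ¬ ((f ξ).1 < d ∧ d < (f ξ).2.1)) ∧
        (∀ p, (f ξ).1 < p → p < (f ξ).2.1 → p = (f ξ).2.2.1 ∨ p = (f ξ).2.2.2) := by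
      intro ξ hξ
      have hc : (Stmt2Aux.prevSet Dstar f ξ).Countable :=
        Stmt2Aux.prevSet_countable hDstar f hξ
      have he : f ξ = F2 (Stmt2Aux.prevSet Dstar f ξ) hc := by
        have h2 := Stmt2Aux.recPts_eq Dstar F2 (F2 ∅ Set.countable_empty) ξ
        rw [← hfdef] at h2
        rw [h2]
        exact dif_pos hc
      rw [he]
      exact ⟨hQ1 _ hc, hQ2 _ hc, hQ3 _ hc⟩
    have hcore : ∀ α β : Ordinal, α < β → β < omega1 → ∀ m : L,
        (f α).1 < m → m < (f α).2.1 → (f β).1 < m → m < (f β).2.1 → False := by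
      intro α β hab hb m h1 h2 h3 h4
      have ha := hab.trans hb
      have hm := (hkey α ha).2.2 m h1 h2
      have hmm : m ∈ Stmt2Aux.prevSet Dstar f β := by
        refine Stmt2Aux.mem_prevSet hab ?_
        rcases hm with rfl | rfl <;> simp [Stmt2Aux.coords4]
      exact (hkey β hb).2.1 m hmm ⟨h3, h4⟩
    refine hccc ⟨(fun α => ((f α).1, (f α).2.1)) '' Set.Iio omega1, ?_, ?_, ?_⟩
    · intro hI
      refine Stmt2Aux.not_countable_Iio
        (Set.countable_of_injective_of_countable_image ?_ hI)
      intro α hα β hβ heq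
      by_contra hne
      simp only [Prod.mk.injEq] at heq
      rcases Ne.lt_or_gt hne with h | h
      · exact hcore α β h hβ (f β).2.2.1 (by rw [heq.1]; exact (hkey β hβ).1.1)
          (by rw [heq.2]; exact (hkey β hβ).1.2) (hkey β hβ).1.1 (hkey β hβ).1.2
      · exact hcore β α h hα (f α).2.2.1 (by rw [← heq.1]; exact (hkey α hα).1.1)
          (by rw [← heq.2]; exact (hkey α hα).1.2) (hkey α hα).1.1 (hkey α hα).1.2
    · rintro p ⟨α, hα, rfl⟩
      exact ⟨(f α).2.2.1, (hkey α hα).1.1, (hkey α hα).1.2⟩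
    · rintro p ⟨α, hα, rfl⟩ r ⟨β, hβ, rfl⟩ hner ⟨m, ⟨hm1, hm2⟩, hm3, hm4⟩
      have hab : α ≠ β := by rintro rfl; exact hner rfl
      rcases hab.lt_or_gt with h | h
      · exact hcore α β h hβ m hm1 hm2 hm3 hm4
      · exact hcore β α h hα m hm3 hm4 hm1 hm2
end

section
/- Let L be a dense c.c.c. linear order. Then L is 2-entangled if and only if L is weakly 2-entangled. -/
open Set Cardinal

lemma omega1_pos : (0 : Ordinal) < omega1 := by
  rw [omega1, Cardinal.lt_ord, Ordinal.card_zero]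
  exact lt_of_le_of_lt zero_le Cardinal.aleph0_lt_aleph_one

lemma succ_lt_omega1 {ξ : Ordinal} (h : ξ < omega1) : ξ + 1 < omega1 := by
  have hl : Order.IsSuccLimit omega1 := Cardinal.isSuccLimit_ord (Cardinal.aleph0_le_aleph 1)
  rw [Ordinal.add_one_eq_succ]; exact hl.succ_lt h

lemma countable_Iio_of_lt {α : Ordinal} (h : α < omega1) : (Set.Iio α).Countable := by
  rw [Cardinal.countable_iff_lt_aleph_one, Ordinal.mk_Iio_ordinal]
  have h2 : α.card < Cardinal.aleph 1 := Cardinal.lt_ord.mp h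
  calc Cardinal.lift.{1} α.card < Cardinal.lift.{1} (Cardinal.aleph 1) :=
        Cardinal.lift_lt.mpr h2
    _ = ℵ₁ := by rw [Cardinal.lift_aleph, Ordinal.lift_one]

lemma not_countable_Iio_omega1 : ¬ (Set.Iio omega1).Countable := by
  rw [Cardinal.countable_iff_lt_aleph_one, Ordinal.mk_Iio_ordinal, omega1,
    Cardinal.card_ord, Cardinal.lift_aleph, Ordinal.lift_one]
  exact lt_irrefl _

lemma exists_inj_into {S : Set Ordinal.{0}} (hS : ¬ S.Countable) :
    ∃ f : Ordinal → Ordinal, (∀ ξ, ξ < omega1 → f ξ ∈ S) ∧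
      Set.InjOn f (Set.Iio omega1) := by
  classical
  have h1 : ℵ₁ ≤ #S := by
    rw [Cardinal.countable_iff_lt_aleph_one, not_lt] at hS; exact hS
  have h2 : #(Set.Iio omega1) ≤ #S := by
    rw [Ordinal.mk_Iio_ordinal, omega1, Cardinal.card_ord, Cardinal.lift_aleph,
      Ordinal.lift_one]
    exact h1
  obtain ⟨e⟩ := (Cardinal.le_def _ _).mp h2
  refine ⟨fun ξ => if h : ξ < omega1 then (e ⟨ξ, h⟩ : Ordinal) else 0, ?_, ?_⟩
  · intro ξ h
    simp only [dif_pos h]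
    exact (e ⟨ξ, h⟩).2
  · intro x hx y hy hxy
    rw [Set.mem_Iio] at hx hy
    simp only [dif_pos hx, dif_pos hy] at hxy
    have := e.injective (Subtype.coe_injective hxy)
    exact congrArg Subtype.val this

lemma not_countable_image {α : Type*} {s : Set Ordinal.{0}} (hs : ¬ s.Countable)
    {f : Ordinal → α} (hf : Set.InjOn f s) : ¬ (f '' s).Countable := by
  intro h
  apply hs
  have hsub : s ⊆ ⋃ p ∈ f '' s, {x | x ∈ s ∧ f x = p} := fun x hx =>
    Set.mem_biUnion ⟨x, hx, rfl⟩ ⟨hx, rfl⟩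
  refine Set.Countable.mono hsub (h.biUnion fun p _ => ?_)
  apply Set.Subsingleton.countable
  intro x hx y hy
  exact hf hx.1 hy.1 (hx.2.trans hy.2.symm)

lemma rec_avoid (B : Ordinal → Set Ordinal) (hB : ∀ ξ, ξ < omega1 → (B ξ).Countable) :
    ∃ f : Ordinal → Ordinal, ∀ α, α < omega1 →
      (f α < omega1 ∧ ∀ β, β < α → f α ∉ B (f β)) := by
  classical
  set pick : Set Ordinal → Ordinal := fun s =>
    Classical.epsilon (fun x => x ∈ Set.Iio omega1 \ s) with hpick
  set f : Ordinal → Ordinal := Ordinal.lt_wf.fix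
    (fun α ih => pick (⋃ β, ⋃ h : β < α, B (ih β h))) with hf
  have hfix : ∀ α, f α = pick (⋃ β, ⋃ _ : β < α, B (f β)) := fun α =>
    Ordinal.lt_wf.fix_eq _ α
  refine ⟨f, ?_⟩
  intro α
  induction α using Ordinal.induction with
  | _ α IH =>
    intro hα
    have hcnt : (⋃ β, ⋃ _ : β < α, B (f β)).Countable := by
      have : (⋃ β ∈ Set.Iio α, B (f β)).Countable :=
        Set.Countable.biUnion (countable_Iio_of_lt hα)
          (fun β hβ => hB _ (IH β hβ (lt_trans hβ hα)).1)
      simpa using this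
    have hne : (Set.Iio omega1 \ ⋃ β, ⋃ _ : β < α, B (f β)).Nonempty := by
      rw [Set.diff_nonempty]
      intro hsub
      exact not_countable_Iio_omega1 (Set.Countable.mono hsub hcnt)
    have hval : f α ∈ Set.Iio omega1 \ ⋃ β, ⋃ _ : β < α, B (f β) := by
      rw [hfix α]
      exact Classical.epsilon_spec
        (⟨hne.choose, hne.choose_spec⟩ : ∃ x, x ∈ Set.Iio omega1 \ ⋃ β, ⋃ _ : β < α, B (f β))
    refine ⟨hval.1, fun β hβ hmem => hval.2 ?_⟩
    simp only [Set.mem_iUnion]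
    exact ⟨β, hβ, hmem⟩

/-- Pairwise disjoint ω₁-family of nonempty intervals contradicts CCC. -/
lemma ccc_no_family {L : Type*} [LinearOrder L] [DenselyOrdered L] (h : CCC L)
    (p q : Ordinal → L)
    (hlt : ∀ ξ, ξ < omega1 → p ξ < q ξ)
    (hdisj : ∀ ξ, ξ < omega1 → ∀ δ, δ < omega1 → ξ < δ →
      ∀ c, ¬ ((p ξ < c ∧ c < q ξ) ∧ (p δ < c ∧ c < q δ)))
    (hinj : ∀ ξ, ξ < omega1 → ∀ δ, δ < omega1 → ξ ≠ δ → p ξ ≠ p δ) : False := by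
  apply h
  refine ⟨(fun ξ => (p ξ, q ξ)) '' Set.Iio omega1, ?_, ?_, ?_⟩
  · refine not_countable_image not_countable_Iio_omega1 ?_
    intro x hx y hy hxy
    by_contra hne
    exact hinj x hx y hy hne (congrArg Prod.fst hxy)
  · rintro _ ⟨ξ, hξ, rfl⟩
    exact exists_between (hlt ξ hξ)
  · rintro _ ⟨ξ, hξ, rfl⟩ _ ⟨δ, hδ, rfl⟩ hne ⟨c, hc1, hc2⟩
    rw [Set.mem_Iio] at hξ hδ
    rcases lt_trichotomy ξ δ with h' | h' | h'
    · exact hdisj ξ hξ δ hδ h' c ⟨hc1, hc2⟩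
    · exact hne (by rw [h'])
    · exact hdisj δ hδ ξ hξ h' c ⟨hc2, hc1⟩

/-- If some point is inside uncountably many of the intervals, weak entangledness
realizes every type. -/
lemma sep_realizes {L : Type*} [LinearOrder L] (hw : WeaklyEntangled L 2)
    (a : Ordinal → ℕ → L) (hinc : ∀ ξ, ξ < omega1 → IncreasingTuple 2 (a ξ))
    (hd : DisjointSeq 2 a) (c : L)
    (hS : ¬ {ξ | ξ < omega1 ∧ a ξ 0 < c ∧ c < a ξ 1}.Countable)
    (g : ℕ → Bool) : RealizesType 2 a g := by
  obtain ⟨f, hf1, hf2⟩ := exists_inj_into hS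
  have hmem : ∀ ξ, ξ < omega1 → f ξ < omega1 ∧ a (f ξ) 0 < c ∧ c < a (f ξ) 1 :=
    fun ξ hξ => hf1 ξ hξ
  have hb1 : ∀ ξ, ξ < omega1 → IncreasingTuple 2 (a (f ξ)) :=
    fun ξ hξ => hinc _ (hmem ξ hξ).1
  have hb2 : DisjointSeq 2 (fun ξ => a (f ξ)) := by
    intro ξ hξ δ hδ hne i hi j hj
    exact hd _ (hmem ξ hξ).1 _ (hmem δ hδ).1 (fun hEq => hne (hf2 hξ hδ hEq)) i hi j hj
  have hb3 : SeparatedSeq 2 (fun ξ => a (f ξ)) := by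
    refine ⟨fun _ => c, ?_⟩
    intro ξ hξ i hi
    have : i = 0 := by omega
    subst this
    exact ⟨(hmem ξ hξ).2.1, (hmem ξ hξ).2.2⟩
  obtain ⟨ξ, hξ, δ, hδ, hreal⟩ := hw (fun ξ => a (f ξ)) hb1 hb2 hb3 g
  exact ⟨f ξ, (hmem ξ hξ).1, f δ, (hmem δ hδ).1, hreal⟩

/-- for a dense c.c.c. linear order, 2-entangled ↔ weakly 2-entangled. -/
theorem stmt4 (L : Type*) [LinearOrder L] [DenselyOrdered L] (h : CCC L) :
    Entangled L 2 ↔ WeaklyEntangled L 2 := by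
  constructor
  · intro he a h1 h2 _ g
    exact he a h1 h2 g
  · intro hw a hinc hd g
    have hlt01 : ∀ ξ, ξ < omega1 → a ξ 0 < a ξ 1 :=
      fun ξ hξ => hinc ξ hξ 0 1 zero_lt_one one_lt_two
    by_cases hcase : ∃ c : L, ¬ {ξ | ξ < omega1 ∧ a ξ 0 < c ∧ c < a ξ 1}.Countable
    · obtain ⟨c, hc⟩ := hcase
      exact sep_realizes hw a hinc hd c hc g
    push_neg at hcase
    -- hcase : every point lies in only countably many intervals
    -- Claim 1: there is a nested pair.
    have hnested : ∃ ξ, ξ < omega1 ∧ ∃ δ, δ < omega1 ∧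
        a ξ 0 < a δ 0 ∧ a δ 1 < a ξ 1 := by
      by_contra hno
      push_neg at hno
      have haligned : ∀ ξ, ξ < omega1 → ∀ δ, δ < omega1 → ξ ≠ δ →
          a ξ 0 < a δ 0 → a ξ 1 < a δ 1 := by
        intro ξ hξ δ hδ hne h0
        rcases lt_or_eq_of_le (hno ξ hξ δ hδ h0) with h' | h'
        · exact h'
        · exact absurd h' (hd ξ hξ δ hδ hne 1 one_lt_two 1 one_lt_two)
      obtain ⟨f, hf⟩ := rec_avoid
        (fun ξ => {δ | δ < omega1 ∧ ((a δ 0 < a ξ 0 ∧ a ξ 0 < a δ 1) ∨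
          (a δ 0 < a ξ 1 ∧ a ξ 1 < a δ 1))} ∪ {ξ})
        (by
          intro ξ hξ
          show ({δ | δ < omega1 ∧ ((a δ 0 < a ξ 0 ∧ a ξ 0 < a δ 1) ∨
            (a δ 0 < a ξ 1 ∧ a ξ 1 < a δ 1))} ∪ {ξ}).Countable
          refine Set.Countable.mono ?_
            (((hcase (a ξ 0)).union (hcase (a ξ 1))).union (Set.countable_singleton ξ))
          rintro δ (⟨hδ, (h1 | h1)⟩ | h1)
          · exact Or.inl (Or.inl ⟨hδ, h1.1, h1.2⟩)
          · exact Or.inl (Or.inr ⟨hδ, h1.1, h1.2⟩)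
          · exact Or.inr h1)
      have hne : ∀ β, β < omega1 → ∀ γ, γ < omega1 → β < γ → f γ ≠ f β := by
        intro β hβ γ hγ hlt hEq
        have := (hf γ hγ).2 β hlt
        rw [hEq] at this
        exact this (Or.inr rfl)
      refine ccc_no_family h (fun γ => a (f γ) 0) (fun γ => a (f γ) 1) ?_ ?_ ?_
      · intro γ hγ
        exact hlt01 _ (hf γ hγ).1
      · intro β hβ γ hγ hlt c ⟨⟨hc1, hc2⟩, ⟨hc3, hc4⟩⟩
        have hnotB := (hf γ hγ).2 β hlt
        have hfne : f γ ≠ f β := hne β hβ γ hγ hlt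
        have hβ1 : f β < omega1 := (hf β hβ).1
        have hγ1 : f γ < omega1 := (hf γ hγ).1
        rcases lt_trichotomy (a (f β) 0) (a (f γ) 0) with h0 | h0 | h0
        · have h1 : a (f β) 1 < a (f γ) 1 :=
            haligned _ hβ1 _ hγ1 (fun hEq => hfne hEq.symm) h0
          exact hnotB (Or.inl ⟨hγ1, Or.inr ⟨lt_trans hc3 hc2, h1⟩⟩)
        · exact hd _ hβ1 _ hγ1 (fun hEq => hfne hEq.symm) 0 two_pos 0 two_pos h0
        · have h1 : a (f γ) 1 < a (f β) 1 := haligned _ hγ1 _ hβ1 hfne h0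
          exact hnotB (Or.inl ⟨hγ1, Or.inl ⟨h0, lt_trans hc1 hc4⟩⟩)
      · intro β hβ γ hγ hne'
        rcases lt_trichotomy β γ with h' | h' | h'
        · exact fun hEq => hd _ (hf β hβ).1 _ (hf γ hγ).1
            (fun hE => hne β hβ γ hγ h' hE.symm) 0 two_pos 0 two_pos hEq
        · exact absurd h' hne'
        · exact fun hEq => hd _ (hf β hβ).1 _ (hf γ hγ).1
            (hne γ hγ β hβ h') 0 two_pos 0 two_pos hEq
    -- Claim 2: there is a pair with both coordinates increasing.
    have hTT : ∃ ξ, ξ < omega1 ∧ ∃ δ, δ < omega1 ∧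
        a ξ 0 < a δ 0 ∧ a ξ 1 < a δ 1 := by
      by_contra hno
      push_neg at hno
      obtain ⟨f, hf⟩ := rec_avoid
        (fun ξ => {δ | δ < omega1 ∧ a δ 0 < a ξ 0} ∪ {ξ})
        (by
          intro ξ hξ
          show ({δ | δ < omega1 ∧ a δ 0 < a ξ 0} ∪ {ξ}).Countable
          obtain ⟨c, hc1, hc2⟩ := exists_between (hlt01 ξ hξ)
          refine Set.Countable.union (Set.Countable.mono ?_ (hcase c))
            (Set.countable_singleton ξ)
          rintro δ ⟨hδ, h0⟩
          refine ⟨hδ, lt_trans h0 hc1, lt_of_lt_of_le hc2 ?_⟩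
          exact hno δ hδ ξ hξ h0)
      have hmono : ∀ β, β < omega1 → ∀ γ, γ < omega1 → β < γ →
          a (f β) 0 < a (f γ) 0 := by
        intro β hβ γ hγ hlt
        have hnotB := (hf γ hγ).2 β hlt
        have hfne : f γ ≠ f β := fun hEq => hnotB (by rw [hEq]; exact Or.inr rfl)
        rcases lt_trichotomy (a (f β) 0) (a (f γ) 0) with h0 | h0 | h0
        · exact h0
        · exact absurd h0 (hd _ (hf β hβ).1 _ (hf γ hγ).1
            (fun hE => hfne hE.symm) 0 two_pos 0 two_pos)
        · exact absurd (Or.inl ⟨(hf γ hγ).1, h0⟩) hnotB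
      refine ccc_no_family h (fun γ => a (f γ) 0) (fun γ => a (f (γ + 1)) 0) ?_ ?_ ?_
      · intro γ hγ
        exact hmono γ hγ _ (succ_lt_omega1 hγ) (lt_add_one γ)
      · intro β hβ γ hγ hlt c ⟨⟨hc1, hc2⟩, ⟨hc3, hc4⟩⟩
        have h1 : a (f (β + 1)) 0 ≤ a (f γ) 0 := by
          rcases lt_or_eq_of_le (Order.add_one_le_iff.mpr hlt) with h' | h'
          · exact le_of_lt (hmono _ (succ_lt_omega1 hβ) _ hγ h')
          · rw [h']
        exact absurd hc2 (not_lt.mpr (le_of_lt (lt_of_le_of_lt h1 hc3)))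
      · intro β hβ γ hγ hne'
        rcases lt_trichotomy β γ with h' | h' | h'
        · exact ne_of_lt (hmono β hβ γ hγ h')
        · exact absurd h' hne'
        · exact (ne_of_lt (hmono γ hγ β hβ h')).symm
    -- Now realize the type `g` by cases on `g 0` and `g 1`.
    rcases hnested with ⟨ξ₁, hξ₁, δ₁, hδ₁, hn0, hn1⟩
    rcases hTT with ⟨ξ₂, hξ₂, δ₂, hδ₂, ht0, ht1⟩
    cases hg0 : g 0 <;> cases hg1 : g 1
    · refine ⟨0, omega1_pos, 0, omega1_pos, ?_⟩
      intro i hi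
      refine iff_of_false (lt_irrefl _) ?_
      interval_cases i
      · rw [hg0]; exact Bool.false_ne_true
      · rw [hg1]; exact Bool.false_ne_true
    · refine ⟨δ₁, hδ₁, ξ₁, hξ₁, ?_⟩
      intro i hi
      interval_cases i
      · exact iff_of_false (asymm hn0) (by rw [hg0]; exact Bool.false_ne_true)
      · exact iff_of_true hn1 hg1
    · refine ⟨ξ₁, hξ₁, δ₁, hδ₁, ?_⟩
      intro i hi
      interval_cases i
      · exact iff_of_true hn0 hg0
      · exact iff_of_false (asymm hn1) (by rw [hg1]; exact Bool.false_ne_true)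
    · refine ⟨ξ₂, hξ₂, δ₂, hδ₂, ?_⟩
      intro i hi
      interval_cases i
      · exact iff_of_true ht0 hg0
      · exact iff_of_true ht1 hg1
end

section
/- For every n with 2 ≤ n < ω, a dense separable linear order is n-entangled if and only if it is weakly n-entangled. -/
/-- for `2 ≤ n`, a dense separable linear order is `n`-entangled iff it
is weakly `n`-entangled. -/
theorem stmt7 (n : ℕ) (hn : 2 ≤ n) (L : Type*) [LinearOrder L] [DenselyOrdered L]
    (hsep : SeparableOrder L) :
    Entangled L n ↔ WeaklyEntangled L n := by
  constructor
  · intro hE a h1 h2 _ g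
    exact hE a h1 h2 g
  · intro hW a h1 h2 g
    obtain ⟨D, hD1, hD2⟩ := hsep
    haveI := hD1.to_subtype
    -- cardinality of the index set
    have hcard : Cardinal.mk (Set.Iio omega1) = Cardinal.aleph 1 := by
      rw [Ordinal.mk_Iio_ordinal, omega1, Cardinal.card_ord, Cardinal.lift_aleph,
        Ordinal.lift_one]
    -- choose separating points from D for each ξ
    have key : ∀ (ξ : Set.Iio omega1) (i : Fin (n - 1)),
        ∃ d : D, a ξ.1 i.1 < d.1 ∧ d.1 < a ξ.1 (i.1 + 1) := by
      intro ξ i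
      have hi : (i : ℕ) + 1 < n := by have := i.isLt; omega
      have hlt : a ξ.1 i.1 < a ξ.1 (i.1 + 1) :=
        h1 ξ.1 ξ.2 i.1 (i.1 + 1) (Nat.lt_succ_self _) hi
      obtain ⟨m, hm1, hm2⟩ := exists_between hlt
      obtain ⟨d, hd, h3, h4⟩ := hD2 _ _ hlt ⟨m, hm1, hm2⟩
      exact ⟨⟨d, hd⟩, h3, h4⟩
    choose F hF1 hF2 using key
    -- some fiber of F is uncountable
    have hfib : ∃ y : Fin (n - 1) → D, ¬ (F ⁻¹' {y}).Countable := by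
      by_contra hc
      push_neg at hc
      have huniv : (Set.univ : Set (Set.Iio omega1)).Countable := by
        have : (Set.univ : Set (Set.Iio omega1)) = ⋃ y, F ⁻¹' {y} := by
          ext x; simp
        rw [this]
        exact Set.countable_iUnion hc
      haveI : Countable (Set.Iio omega1) := Set.countable_univ_iff.mp huniv
      have hle : Cardinal.mk (Set.Iio omega1) ≤ Cardinal.aleph0 := Cardinal.mk_le_aleph0
      rw [hcard] at hle
      exact absurd hle (not_le.mpr Cardinal.aleph0_lt_aleph_one)
    obtain ⟨y, hy⟩ := hfib
    have hS : Cardinal.mk (Set.Iio omega1) ≤ Cardinal.mk (F ⁻¹' {y}) := by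
      rw [hcard, ← not_lt, ← Cardinal.countable_iff_lt_aleph_one]
      exact hy
    obtain ⟨e⟩ := (Cardinal.le_def _ _).mp hS
    -- the re-indexing map
    let E : Ordinal → Ordinal := fun ξ =>
      if h : ξ < omega1 then ((e ⟨ξ, h⟩).1 : Set.Iio omega1).1 else ξ
    have hEdef : ∀ ξ (h : ξ < omega1), E ξ = ((e ⟨ξ, h⟩).1 : Set.Iio omega1).1 := by
      intro ξ h; simp only [E, dif_pos h]
    have hE1 : ∀ ξ, ξ < omega1 → E ξ < omega1 := by
      intro ξ h; rw [hEdef ξ h]; exact ((e ⟨ξ, h⟩).1).2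
    have hEinj : ∀ ξ δ, ξ < omega1 → δ < omega1 → ξ ≠ δ → E ξ ≠ E δ := by
      intro ξ δ hξ hδ hne
      rw [hEdef ξ hξ, hEdef δ hδ]
      intro heq
      apply hne
      have : e ⟨ξ, hξ⟩ = e ⟨δ, hδ⟩ := Subtype.ext (Subtype.ext heq)
      have := e.injective this
      exact congrArg Subtype.val this
    have hEfib : ∀ ξ (h : ξ < omega1), F ⟨E ξ, hE1 ξ h⟩ = y := by
      intro ξ h
      have h2' : F (e ⟨ξ, h⟩).1 = y := (e ⟨ξ, h⟩).2
      have : (⟨E ξ, hE1 ξ h⟩ : Set.Iio omega1) = (e ⟨ξ, h⟩).1 :=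
        Subtype.ext (hEdef ξ h)
      rw [this]; exact h2'
    -- the new sequence
    set b : Ordinal → ℕ → L := fun ξ i => a (E ξ) i with hb
    have hinc : ∀ ξ, ξ < omega1 → IncreasingTuple n (b ξ) := by
      intro ξ hξ; exact h1 _ (hE1 ξ hξ)
    have hdisj : DisjointSeq n b := by
      intro ξ hξ δ hδ hne i hi j hj
      exact h2 _ (hE1 ξ hξ) _ (hE1 δ hδ) (hEinj ξ δ hξ hδ hne) i hi j hj
    have hsepseq : SeparatedSeq n b := by
      refine ⟨fun i => if h : i + 1 < n then (y ⟨i, by omega⟩).1 else a 0 0, ?_⟩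
      intro ξ hξ i hi
      simp only [dif_pos hi]
      have hfy := hEfib ξ hξ
      have hy1 := hF1 ⟨E ξ, hE1 ξ hξ⟩ ⟨i, by omega⟩
      have hy2 := hF2 ⟨E ξ, hE1 ξ hξ⟩ ⟨i, by omega⟩
      rw [hfy] at hy1 hy2
      exact ⟨hy1, hy2⟩
    obtain ⟨ξ, hξ, δ, hδ, hreal⟩ := hW b hinc hdisj hsepseq g
    exact ⟨E ξ, hE1 ξ hξ, E δ, hE1 δ hδ, hreal⟩
end
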